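/- arXiv:1504.02214 — 7 statements merged into one kernel-verified Lean document; each statement's English description precedes it below -/
import Mathlib

section
/- Let x ∈ ℂ^N, N = 2^J, have support length m ≤ 2^L with L < J-1. Then x is uniquely determined by its 2^{L+1}-periodization x^(L+1) together with one nonzero odd-indexed Fourier coefficient x̂_{2k₀+1}. Concretely: if u, v ∈ ℂ^N both have support contained in a cyclic interval of length m ≤ 2^L, have the same 2^{L+1}-periodization, and satisfy û_{2k₀+1} = v̂_{2k₀+1} ≠ 0 for some k₀, then u = v. -/
/-- Discrete Fourier transform of length `N`, `(dft N x) k = ∑_{j<N} x j ω_N^{jk}`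
with `ω_N = e^{-2πi/N}`. -/
noncomputable def dft (N : ℕ) (x : ℕ → ℂ) (k : ℕ) : ℂ :=
  ∑ j ∈ Finset.range N, x j * Complex.exp (-2 * Real.pi * Complex.I * ((j : ℂ) * k) / N)

/-- `2^j`-periodization of a vector of length `2^J`. -/
noncomputable def perio (x : ℕ → ℂ) (J j k : ℕ) : ℂ :=
  ∑ ℓ ∈ Finset.range (2 ^ (J - j)), x (k + 2 ^ j * ℓ)

open Complex Finset

/-- The exponential appearing in the DFT. -/
noncomputable def EE (N ξ n : ℕ) : ℂ := Complex.exp (-2 * Real.pi * Complex.I * ((n : ℂ) * ξ) / N)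

lemma EE_add (N ξ a b : ℕ) : EE N ξ (a + b) = EE N ξ a * EE N ξ b := by
  rw [EE, EE, EE, ← Complex.exp_add]
  congr 1
  push_cast
  ring

lemma EE_mul_left (N ξ : ℕ) (hN : 0 < N) (q r : ℕ) : EE N ξ (N * q + r) = EE N ξ r := by
  have hNC : (N : ℂ) ≠ 0 := by exact_mod_cast hN.ne'
  rw [EE, EE, show (-2 * Real.pi * Complex.I * (((N * q + r : ℕ) : ℂ) * ξ) / N)
      = ((-(q * ξ : ℕ) : ℤ) : ℂ) * (2 * Real.pi * Complex.I)
        + (-2 * Real.pi * Complex.I * ((r : ℂ) * ξ) / N) by push_cast; field_simp; ring,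
    Complex.exp_add, Complex.exp_int_mul_two_pi_mul_I, one_mul]

lemma EE_mod (N ξ : ℕ) (hN : 0 < N) (n : ℕ) : EE N ξ n = EE N ξ (n % N) := by
  conv_lhs => rw [← Nat.div_add_mod n N]
  exact EE_mul_left N ξ hN _ _

lemma EE_modeq (N ξ : ℕ) (hN : 0 < N) {a b : ℕ} (h : a ≡ b [MOD N]) : EE N ξ a = EE N ξ b := by
  rw [EE_mod N ξ hN a, EE_mod N ξ hN b, show a % N = b % N from h]

lemma EE_ne_zero (N ξ n : ℕ) : EE N ξ n ≠ 0 := Complex.exp_ne_zero _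

lemma cast_val_eq (N : ℕ) [NeZero N] (j : ZMod N) : ((j.val : ℕ) : ZMod N) = j := by
  simp [ZMod.natCast_val, ZMod.cast_id]

lemma dft_zmod (N : ℕ) [NeZero N] (x : ℕ → ℂ) (ξ : ℕ) :
    dft N x ξ = ∑ j : ZMod N, x j.val * EE N ξ j.val := by
  rw [dft]
  refine Finset.sum_nbij' (fun i => (i : ZMod N)) (fun j => j.val) ?_ ?_ ?_ ?_ ?_
  · intro a _; exact mem_univ _
  · intro b _; exact mem_range.mpr (ZMod.val_lt b)
  · intro a ha; exact ZMod.val_natCast_of_lt (mem_range.mp ha)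
  · intro b _; exact cast_val_eq N b
  · intro a ha; rw [ZMod.val_natCast_of_lt (mem_range.mp ha)]; rfl

lemma perio_fiber (J L : ℕ) (hL : L + 1 ≤ J) (x : ℕ → ℂ) (k : ℕ) (hk : k < 2 ^ (L + 1)) :
    perio x J (L + 1) k
      = ∑ j' ∈ Finset.univ.filter (fun j' : ZMod (2 ^ J) => j'.val % 2 ^ (L + 1) = k),
          x j'.val := by
  haveI : NeZero (2 ^ J) := ⟨pow_ne_zero _ two_ne_zero⟩
  have hP : 0 < 2 ^ (L + 1) := Nat.pow_pos (by norm_num)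
  have hNPQ : 2 ^ J = 2 ^ (L + 1) * 2 ^ (J - (L + 1)) := by
    rw [← pow_add]; congr 1; omega
  have hlt : ∀ ℓ ∈ Finset.range (2 ^ (J - (L + 1))), k + 2 ^ (L + 1) * ℓ < 2 ^ J := by
    intro ℓ hℓ
    have h1 := mem_range.mp hℓ
    have h2 : k + 2 ^ (L + 1) * ℓ < 2 ^ (L + 1) * (ℓ + 1) := by rw [Nat.mul_succ]; omega
    exact h2.trans_le (hNPQ ▸ Nat.mul_le_mul_left _ (by omega))
  rw [perio]
  refine Finset.sum_nbij' (fun ℓ => ((k + 2 ^ (L + 1) * ℓ : ℕ) : ZMod (2 ^ J)))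
    (fun j => j.val / 2 ^ (L + 1)) ?_ ?_ ?_ ?_ ?_
  · intro ℓ hℓ
    simp only [mem_filter, mem_univ, true_and]
    rw [ZMod.val_natCast_of_lt (hlt ℓ hℓ), Nat.add_mul_mod_self_left, Nat.mod_eq_of_lt hk]
  · intro j hj
    have h3 : j.val < 2 ^ (L + 1) * 2 ^ (J - (L + 1)) := (ZMod.val_lt j).trans_le hNPQ.le
    exact mem_range.mpr (Nat.div_lt_of_lt_mul (by omega))
  · intro ℓ hℓ
    rw [ZMod.val_natCast_of_lt (hlt ℓ hℓ), Nat.add_mul_div_left _ _ hP, Nat.div_eq_of_lt hk,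
      zero_add]
  · intro j hj
    have hk' : j.val % 2 ^ (L + 1) = k := (mem_filter.mp hj).2
    rw [← hk', Nat.mod_add_div, cast_val_eq]
  · intro ℓ hℓ
    rw [ZMod.val_natCast_of_lt (hlt ℓ hℓ)]

/-- Within a cyclic interval of length `m ≤ P`, elements are determined by their class mod `P`. -/
lemma class_unique (N P m : ℕ) [NeZero N] (hPN : P ∣ N) (hm : m ≤ P) (μ : ℕ)
    {j j' : ZMod N} (hj : ∃ r, r < m ∧ j = ((μ + r : ℕ) : ZMod N))
    (hj' : ∃ r, r < m ∧ j' = ((μ + r : ℕ) : ZMod N))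
    (h : j.val % P = j'.val % P) : j = j' := by
  obtain ⟨r, hr, rfl⟩ := hj
  obtain ⟨s, hs, rfl⟩ := hj'
  have h1 : (μ + r) % P = (μ + s) % P := by
    rwa [ZMod.val_natCast, ZMod.val_natCast, Nat.mod_mod_of_dvd _ hPN,
      Nat.mod_mod_of_dvd _ hPN] at h
  have h2 : r % P = s % P := Nat.ModEq.add_left_cancel' μ h1
  rw [Nat.mod_eq_of_lt (hr.trans_le hm), Nat.mod_eq_of_lt (hs.trans_le hm)] at h2
  rw [h2]

/-- If two vectors supported on length-`m` cyclic intervals have equal fiber sums mod `P`,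
then every nonzero value of `V` is matched by an equal nonzero value of `U` in the same fiber. -/
lemma matching_aux (N P m : ℕ) [NeZero N] (hPN : P ∣ N) (hm : m ≤ P)
    (U V : ZMod N → ℂ) (μu μv : ℕ)
    (hU : ∀ j, U j ≠ 0 → ∃ r, r < m ∧ j = ((μu + r : ℕ) : ZMod N))
    (hV : ∀ j, V j ≠ 0 → ∃ r, r < m ∧ j = ((μv + r : ℕ) : ZMod N))
    (hsum : ∀ j : ZMod N,
      ∑ j' ∈ Finset.univ.filter (fun j' : ZMod N => j'.val % P = j.val % P), U j'
        = ∑ j' ∈ Finset.univ.filter (fun j' : ZMod N => j'.val % P = j.val % P), V j') :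
    ∀ j, V j ≠ 0 → ∃ j', j'.val % P = j.val % P ∧ U j' = V j ∧ U j' ≠ 0 := by
  intro j hVj
  have hVsum : ∑ j' ∈ Finset.univ.filter (fun j' : ZMod N => j'.val % P = j.val % P), V j'
      = V j := by
    refine Finset.sum_eq_single_of_mem j (by simp) ?_
    intro b hb hbj
    by_contra hVb
    exact hbj (class_unique N P m hPN hm μv (hV b hVb) (hV j hVj) (mem_filter.mp hb).2)
  have hUsum := (hsum j).trans hVsum
  obtain ⟨j', hj'mem, hUj'⟩ := Finset.exists_ne_zero_of_sum_ne_zero (hUsum ▸ hVj)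
  have hcl : j'.val % P = j.val % P := (mem_filter.mp hj'mem).2
  have hUs : ∑ j'' ∈ Finset.univ.filter (fun j'' : ZMod N => j''.val % P = j.val % P), U j''
      = U j' := by
    refine Finset.sum_eq_single_of_mem j' hj'mem ?_
    intro b hb hbj
    by_contra hUb
    exact hbj (class_unique N P m hPN hm μu (hU b hUb) (hU j' hUj')
      (((mem_filter.mp hb).2).trans hcl.symm))
  exact ⟨j', hcl, hUs.symm.trans hUsum, hUj'⟩

/-- Classes mod `P` on `ZMod N` correspond to the cast homomorphism when `P ∣ N`. -/
lemma val_mod_eq_iff (N P : ℕ) [NeZero N] (hPN : P ∣ N) (a b : ZMod N) :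
    a.val % P = b.val % P ↔ ZMod.castHom hPN (ZMod P) a = ZMod.castHom hPN (ZMod P) b := by
  constructor
  · intro h
    rw [ZMod.castHom_apply, ZMod.castHom_apply, ← ZMod.natCast_val, ← ZMod.natCast_val]
    exact (ZMod.natCast_eq_natCast_iff _ _ _).mpr h
  · intro h
    rw [ZMod.castHom_apply, ZMod.castHom_apply, ← ZMod.natCast_val, ← ZMod.natCast_val] at h
    exact (ZMod.natCast_eq_natCast_iff _ _ _).mp h

/-- A vector with support in a cyclic interval of length `m ≤ 2^L` is uniquely determined by
its `2^{L+1}`-periodization together with one nonzero odd-indexed Fourier coefficient. -/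
theorem unique_from_perio_and_odd_coeff (J L m k₀ : ℕ) (hL : L + 1 < J) (hm : m ≤ 2 ^ L)
    (u v : ℕ → ℂ) (μu μv : ℕ)
    (hu : ∀ k < 2 ^ J, (∀ r < m, k ≠ (μu + r) % 2 ^ J) → u k = 0)
    (hv : ∀ k < 2 ^ J, (∀ r < m, k ≠ (μv + r) % 2 ^ J) → v k = 0)
    (hper : ∀ k < 2 ^ (L + 1), perio u J (L + 1) k = perio v J (L + 1) k)
    (hdft : dft (2 ^ J) u (2 * k₀ + 1) = dft (2 ^ J) v (2 * k₀ + 1))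
    (hne : dft (2 ^ J) u (2 * k₀ + 1) ≠ 0) :
    ∀ k < 2 ^ J, u k = v k := by
  have hLJ : L + 1 ≤ J := hL.le
  haveI : NeZero (2 ^ J) := ⟨pow_ne_zero _ two_ne_zero⟩
  have hNpos : 0 < 2 ^ J := Nat.pow_pos (by norm_num)
  have hPpos : 0 < 2 ^ (L + 1) := Nat.pow_pos (by norm_num)
  have hPN : (2 : ℕ) ^ (L + 1) ∣ 2 ^ J := pow_dvd_pow 2 hLJ
  have hmP : m ≤ 2 ^ (L + 1) := hm.trans (Nat.pow_le_pow_right (by norm_num) (Nat.le_succ L))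
  have h2m : 2 * m ≤ 2 ^ (L + 1) := by rw [pow_succ]; omega
  -- support descriptions in `ZMod (2^J)`
  have hU : ∀ j : ZMod (2 ^ J), u j.val ≠ 0 →
      ∃ r, r < m ∧ j = ((μu + r : ℕ) : ZMod (2 ^ J)) := by
    intro j hj
    by_contra hcon
    push_neg at hcon
    refine hj (hu j.val (ZMod.val_lt j) ?_)
    intro r hr heq
    refine hcon r hr ?_
    rw [← cast_val_eq (2 ^ J) j, heq, ZMod.natCast_mod]
  have hV : ∀ j : ZMod (2 ^ J), v j.val ≠ 0 →
      ∃ r, r < m ∧ j = ((μv + r : ℕ) : ZMod (2 ^ J)) := by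
    intro j hj
    by_contra hcon
    push_neg at hcon
    refine hj (hv j.val (ZMod.val_lt j) ?_)
    intro r hr heq
    refine hcon r hr ?_
    rw [← cast_val_eq (2 ^ J) j, heq, ZMod.natCast_mod]
  -- fiber sums agree
  have hsum : ∀ j : ZMod (2 ^ J),
      ∑ j' ∈ Finset.univ.filter
        (fun j' : ZMod (2 ^ J) => j'.val % 2 ^ (L + 1) = j.val % 2 ^ (L + 1)), u j'.val
      = ∑ j' ∈ Finset.univ.filter
        (fun j' : ZMod (2 ^ J) => j'.val % 2 ^ (L + 1) = j.val % 2 ^ (L + 1)), v j'.val := by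
    intro j
    have hk : j.val % 2 ^ (L + 1) < 2 ^ (L + 1) := Nat.mod_lt _ hPpos
    have h := hper (j.val % 2 ^ (L + 1)) hk
    rwa [perio_fiber J L hLJ u _ hk, perio_fiber J L hLJ v _ hk] at h
  have MV := matching_aux (2 ^ J) (2 ^ (L + 1)) m hPN hmP
    (fun j => u j.val) (fun j => v j.val) μu μv hU hV hsum
  have MU := matching_aux (2 ^ J) (2 ^ (L + 1)) m hPN hmP
    (fun j => v j.val) (fun j => u j.val) μv μu hV hU (fun j => (hsum j).symm)
  by_cases hVz : ∀ j : ZMod (2 ^ J), v j.val = 0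
  · -- then u is identically 0, contradicting `hne`
    have hUz : ∀ j : ZMod (2 ^ J), u j.val = 0 := by
      intro j
      by_contra hUj
      obtain ⟨j', _, _, hV0⟩ := MU j hUj
      exact hV0 (hVz j')
    have h0 : dft (2 ^ J) u (2 * k₀ + 1) = 0 := by
      rw [dft_zmod]
      exact Finset.sum_eq_zero fun j _ => by rw [hUz j, zero_mul]
    exact absurd h0 hne
  · push_neg at hVz
    obtain ⟨j₀, hj₀⟩ := hVz
    obtain ⟨j₀', hcl₀, hval₀, hne₀⟩ := MV j₀ hj₀
    set t : ZMod (2 ^ J) := j₀' - j₀ with htdef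
    set f := ZMod.castHom hPN (ZMod (2 ^ (L + 1))) with hfdef
    have hft : f t = 0 := by
      rw [htdef, map_sub, sub_eq_zero]
      exact (val_mod_eq_iff _ _ hPN _ _).mp hcl₀
    -- shift relation on the support of v
    have hs : ∀ j : ZMod (2 ^ J), v j.val ≠ 0 → u (j + t).val = v j.val := by
      intro j hVj
      obtain ⟨j', hcl, hval, hUne⟩ := MV j hVj
      suffices hj' : j' = j + t by rw [← hj']; exact hval
      have h1 : f (j' - j) = 0 := by
        rw [map_sub, sub_eq_zero]
        exact (val_mod_eq_iff _ _ hPN _ _).mp hcl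
      obtain ⟨r₀, hr₀, hj₀'e⟩ := hU j₀' hne₀
      obtain ⟨s₀, hs₀, hj₀e⟩ := hV j₀ hj₀
      obtain ⟨r, hr, hj'e⟩ := hU j' hUne
      obtain ⟨s, hs', hje⟩ := hV j hVj
      have hdiff : (j' - j) - t = ((r + s₀ : ℕ) : ZMod (2 ^ J)) - ((r₀ + s : ℕ) : ZMod (2 ^ J)) := by
        rw [htdef, hj₀'e, hj₀e, hj'e, hje]
        push_cast
        ring
      have h2 : f ((j' - j) - t) = 0 := by rw [map_sub, h1, hft, sub_zero]
      rw [hdiff, map_sub, sub_eq_zero, map_natCast, map_natCast] at h2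
      have h3 : r + s₀ ≡ r₀ + s [MOD 2 ^ (L + 1)] := (ZMod.natCast_eq_natCast_iff _ _ _).mp h2
      have h4 : r + s₀ = r₀ + s := by
        have h5 := h3
        unfold Nat.ModEq at h5
        rwa [Nat.mod_eq_of_lt (by omega), Nat.mod_eq_of_lt (by omega)] at h5
      have h6 : (j' - j) - t = 0 := by
        rw [hdiff, h4, sub_self]
      have h7 : j' - j = t := by rwa [sub_eq_zero] at h6
      rw [← h7]
      ring
    -- classes are preserved by the shift
    have hclP : ∀ a : ZMod (2 ^ J), (a + t).val % 2 ^ (L + 1) = a.val % 2 ^ (L + 1) := by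
      intro a
      rw [val_mod_eq_iff _ _ hPN, map_add, hft, add_zero]
    -- shift relation everywhere
    have hshift : ∀ j : ZMod (2 ^ J), v j.val = u (j + t).val := by
      intro j
      by_cases hVj : v j.val = 0
      · rw [hVj]
        by_contra hUne'
        have hUne : u (j + t).val ≠ 0 := fun h => hUne' h.symm
        have hUsum : ∑ j' ∈ Finset.univ.filter
            (fun j' : ZMod (2 ^ J) => j'.val % 2 ^ (L + 1) = j.val % 2 ^ (L + 1)), u j'.val
            = u (j + t).val := by
          refine Finset.sum_eq_single_of_mem (j + t)
            (mem_filter.mpr ⟨mem_univ _, hclP j⟩) ?_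
          intro b hb hbne
          by_contra hUb
          exact hbne (class_unique (2 ^ J) (2 ^ (L + 1)) m hPN hmP μu (hU b hUb) (hU _ hUne)
            (((mem_filter.mp hb).2).trans (hclP j).symm))
        have hVsum : ∑ j' ∈ Finset.univ.filter
            (fun j' : ZMod (2 ^ J) => j'.val % 2 ^ (L + 1) = j.val % 2 ^ (L + 1)), v j'.val
            = 0 := by
          refine Finset.sum_eq_zero ?_
          intro b hb
          by_contra hVb
          have h7 := hs b hVb
          have hUbt : u (b + t).val ≠ 0 := by rw [h7]; exact hVb
          have h8 : b + t = j + t := class_unique (2 ^ J) (2 ^ (L + 1)) m hPN hmP μu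
            (hU _ hUbt) (hU _ hUne)
            (by rw [hclP, hclP]; exact (mem_filter.mp hb).2)
          have hbj : b = j := add_right_cancel h8
          exact (hbj ▸ hVb) hVj
        rw [hsum j, hVsum] at hUsum
        exact hUne hUsum.symm
      · exact (hs j hVj).symm
    -- the DFT picks up a phase `EE t.val`
    have hdftv : dft (2 ^ J) v (2 * k₀ + 1)
        = dft (2 ^ J) u (2 * k₀ + 1) * (EE (2 ^ J) (2 * k₀ + 1) t.val)⁻¹ := by
      rw [dft_zmod, dft_zmod]
      calc ∑ j : ZMod (2 ^ J), v j.val * EE (2 ^ J) (2 * k₀ + 1) j.val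
          = ∑ j : ZMod (2 ^ J), u (j + t).val * EE (2 ^ J) (2 * k₀ + 1) j.val :=
            Finset.sum_congr rfl fun j _ => by rw [hshift j]
        _ = ∑ j : ZMod (2 ^ J), u j.val * EE (2 ^ J) (2 * k₀ + 1) (j - t).val := by
            refine Fintype.sum_equiv (Equiv.addRight t) _ _ fun j => ?_
            simp only [Equiv.coe_addRight]
            rw [add_sub_cancel_right]
        _ = ∑ j : ZMod (2 ^ J), (u j.val * EE (2 ^ J) (2 * k₀ + 1) j.val)
              * (EE (2 ^ J) (2 * k₀ + 1) t.val)⁻¹ := by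
            refine Finset.sum_congr rfl fun j _ => ?_
            have h8 : EE (2 ^ J) (2 * k₀ + 1) ((j - t).val + t.val)
                = EE (2 ^ J) (2 * k₀ + 1) j.val := by
              refine EE_modeq _ _ hNpos ?_
              have h9 := ZMod.val_add (j - t) t
              rw [sub_add_cancel] at h9
              unfold Nat.ModEq
              rw [← h9, Nat.mod_eq_of_lt (ZMod.val_lt j)]
            rw [← h8, EE_add]
            have := EE_ne_zero (2 ^ J) (2 * k₀ + 1) t.val
            field_simp
        _ = (∑ j : ZMod (2 ^ J), u j.val * EE (2 ^ J) (2 * k₀ + 1) j.val)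
              * (EE (2 ^ J) (2 * k₀ + 1) t.val)⁻¹ := by rw [← Finset.sum_mul]
    -- deduce the phase is 1
    have hE1 : EE (2 ^ J) (2 * k₀ + 1) t.val = 1 := by
      have h10 := hdft.trans hdftv
      have hEne := EE_ne_zero (2 ^ J) (2 * k₀ + 1) t.val
      have h11 : (EE (2 ^ J) (2 * k₀ + 1) t.val)⁻¹ = 1 :=
        (mul_left_cancel₀ hne (by rw [mul_one]; exact h10)).symm
      rw [← inv_inv (EE (2 ^ J) (2 * k₀ + 1) t.val), h11, inv_one]
    -- extract divisibility
    obtain ⟨n, hn⟩ := Complex.exp_eq_one_iff.mp (by rw [EE] at hE1; exact hE1)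
    have hNC : ((2 ^ J : ℕ) : ℂ) ≠ 0 := by exact_mod_cast hNpos.ne'
    have hπ : (Real.pi : ℂ) ≠ 0 := Complex.ofReal_ne_zero.mpr Real.pi_ne_zero
    have hI := Complex.I_ne_zero
    rw [div_eq_iff hNC] at hn
    have h12 : ((t.val * (2 * k₀ + 1) : ℕ) : ℂ) = ((-n * (2 ^ J : ℕ) : ℤ) : ℂ) := by
      have h13 : (2 * Real.pi * Complex.I) * ((t.val * (2 * k₀ + 1) : ℕ) : ℂ)
          = (2 * Real.pi * Complex.I) * ((-n * (2 ^ J : ℕ) : ℤ) : ℂ) := by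
        push_cast
        push_cast at hn
        linear_combination -hn
      exact mul_left_cancel₀ (by simp [hπ, hI]) h13
    have hZeq : ((t.val * (2 * k₀ + 1) : ℕ) : ℤ) = -n * (2 ^ J : ℕ) := by
      exact_mod_cast h12
    have hdvd : (2 ^ J : ℕ) ∣ t.val * (2 * k₀ + 1) := by
      have : ((2 ^ J : ℕ) : ℤ) ∣ ((t.val * (2 * k₀ + 1) : ℕ) : ℤ) := ⟨-n, by rw [hZeq]; ring⟩
      exact_mod_cast this
    have hcop : Nat.Coprime (2 ^ J) (2 * k₀ + 1) := by
      refine Nat.Coprime.pow_left _ ?_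
      exact Nat.coprime_two_left.mpr ⟨k₀, by ring⟩
    have htv : t.val = 0 := by
      exact Nat.eq_zero_of_dvd_of_lt (hcop.dvd_of_dvd_mul_right hdvd) (ZMod.val_lt t)
    have ht0 : t = 0 := by rw [← cast_val_eq _ t, htv, Nat.cast_zero]
    intro k hk
    have h16 := hshift (k : ZMod (2 ^ J))
    rw [ht0, add_zero, ZMod.val_natCast_of_lt hk] at h16
    exact h16.symm
end

section
/- Let x ∈ ℂ^N, N = 2^J, have support contained in a cyclic interval of length m with m ≤ N/4. Then the vector of odd-indexed Fourier coefficients (x̂_{2k+1})_{k=0}^{N/2-1} has at most m-1 zero components; in particular, if x ≠ 0, there exists k₀ with x̂_{2k₀+1} ≠ 0. -/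
open Complex Polynomial Finset in
/-- For a nonzero `x ∈ ℂ^{2^J}` supported in a cyclic interval of length `m` with
`4m ≤ N`, at most `m-1` of the odd-indexed Fourier coefficients vanish; in particular
a nonzero odd-indexed Fourier coefficient exists. -/
theorem odd_coeff_nonzero_exists (J m μ : ℕ) (x : ℕ → ℂ) (hm : 4 * m ≤ 2 ^ J)
    (hsupp : ∀ k < 2 ^ J, (∀ r < m, k ≠ (μ + r) % 2 ^ J) → x k = 0)
    (hx : ∃ k < 2 ^ J, x k ≠ 0) :
    ((Finset.range (2 ^ J / 2)).filter (fun k => dft (2 ^ J) x (2 * k + 1) = 0)).card ≤ m - 1 ∧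
    ∃ k₀ < 2 ^ J / 2, dft (2 ^ J) x (2 * k₀ + 1) ≠ 0 := by
  set N := 2 ^ J with hN
  obtain ⟨k₁, hk₁N, hk₁⟩ := hx
  have hm1 : 1 ≤ m := by
    by_contra h
    exact hk₁ (hsupp k₁ hk₁N (fun r hr => absurd hr (by omega)))
  have hN4 : 4 ≤ N := le_trans (by omega) hm
  have hNpos : 0 < N := by omega
  have hJ1 : 1 ≤ J := by
    by_contra h
    have : J = 0 := by omega
    simp [hN, this] at hN4
  have hNhalf : N = 2 * (N / 2) := by
    have : N = 2 * 2 ^ (J - 1) := by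
      rw [hN, ← pow_succ']
      congr 1
      omega
    omega
  have hN0 : (N : ℂ) ≠ 0 := Nat.cast_ne_zero.mpr (by omega)
  set ω : ℂ := Complex.exp (-(2 * Real.pi * Complex.I) / N) with hω
  have hω0 : ω ≠ 0 := Complex.exp_ne_zero _
  have hprim : IsPrimitiveRoot ω N := by
    have h1 := Complex.isPrimitiveRoot_exp N (by omega)
    have h2 : ω = (Complex.exp (2 * Real.pi * Complex.I / N))⁻¹ := by
      rw [← Complex.exp_neg, hω, neg_div]
    rw [h2]
    exact h1.inv
  have hωN : ω ^ N = 1 := hprim.pow_eq_one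
  have hpow : ∀ a : ℕ, ω ^ a = ω ^ (a % N) := by
    intro a
    conv_lhs => rw [← Nat.div_add_mod a N]
    rw [pow_add, pow_mul, hωN, one_pow, one_mul]
  have hexp : ∀ i j : ℕ, Complex.exp (-2 * Real.pi * Complex.I * ((i : ℂ) * j) / N)
      = ω ^ (i * j) := by
    intro i j
    rw [hω, ← Complex.exp_nat_mul]
    congr 1
    push_cast
    ring
  set g : ℕ → ℕ := fun ℓ => (μ + ℓ) % N with hg
  have hglt : ∀ ℓ, g ℓ < N := fun ℓ => Nat.mod_lt _ hNpos
  have hginj : ∀ ℓ ∈ Finset.range m, ∀ ℓ' ∈ Finset.range m, g ℓ = g ℓ' → ℓ = ℓ' := by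
    intro ℓ hℓ ℓ' hℓ' hgl
    simp only [Finset.mem_range] at hℓ hℓ'
    simp only [hg] at hgl
    have h1 : (μ + ℓ) % N = (μ + ℓ') % N := hgl
    have h2 : ℓ % N = ℓ' % N := Nat.ModEq.add_left_cancel' μ h1
    rw [Nat.mod_eq_of_lt (by omega), Nat.mod_eq_of_lt (by omega)] at h2
    exact h2
  set q : Polynomial ℂ := ∑ ℓ ∈ Finset.range m, Polynomial.C (x (g ℓ)) * Polynomial.X ^ ℓ
    with hq
  have hqcoeff : ∀ r < m, q.coeff r = x (g r) := by
    intro r hr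
    rw [hq, Polynomial.finset_sum_coeff]
    simp only [Polynomial.coeff_C_mul, Polynomial.coeff_X_pow]
    rw [Finset.sum_eq_single r]
    · simp
    · intro b _ hb
      simp [Ne.symm hb]
    · intro h
      exact absurd (Finset.mem_range.mpr hr) h
  have hq0 : q ≠ 0 := by
    have hk₁mem : ∃ r < m, k₁ = (μ + r) % N := by
      by_contra h
      push_neg at h
      exact hk₁ (hsupp k₁ hk₁N (fun r hr => h r hr))
    obtain ⟨r, hr, hkr⟩ := hk₁mem
    intro h0
    apply hk₁
    have := hqcoeff r hr
    rw [h0, Polynomial.coeff_zero] at this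
    rw [hkr]
    exact this.symm
  have hdeg : q.natDegree ≤ m - 1 := by
    rw [hq]
    apply Polynomial.natDegree_sum_le_of_forall_le
    intro ℓ hℓ
    simp only [Finset.mem_range] at hℓ
    calc (Polynomial.C (x (g ℓ)) * Polynomial.X ^ ℓ).natDegree
        ≤ ℓ := Polynomial.natDegree_C_mul_X_pow_le _ _
      _ ≤ m - 1 := by omega
  have hqeval : ∀ z : ℂ, q.eval z = ∑ ℓ ∈ Finset.range m, x (g ℓ) * z ^ ℓ := by
    intro z
    rw [hq, Polynomial.eval_finset_sum]
    simp
  have hdft : ∀ j : ℕ, dft N x j = ω ^ (μ * j) * q.eval (ω ^ j) := by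
    intro j
    rw [dft]
    have hsub : (Finset.range m).image g ⊆ Finset.range N := by
      intro i hi
      simp only [Finset.mem_image] at hi
      obtain ⟨ℓ, _, rfl⟩ := hi
      exact Finset.mem_range.mpr (hglt ℓ)
    rw [← Finset.sum_subset hsub]
    · rw [Finset.sum_image hginj, hqeval, Finset.mul_sum]
      apply Finset.sum_congr rfl
      intro ℓ _
      rw [hexp]
      have h1 : ω ^ (g ℓ * j) = ω ^ ((μ + ℓ) * j) := by
        rw [hpow (g ℓ * j), hpow ((μ + ℓ) * j)]
        have hmod : g ℓ ≡ (μ + ℓ) [MOD N] := Nat.mod_mod_of_dvd _ dvd_rfl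
        exact congrArg (ω ^ ·) (hmod.mul_right j)
      rw [h1]
      have h2 : (μ + ℓ) * j = μ * j + j * ℓ := by ring
      rw [h2, pow_add, pow_mul]
      ring
    · intro i hiN hi
      have : x i = 0 := by
        apply hsupp i (Finset.mem_range.mp hiN)
        intro r hr hir
        apply hi
        simp only [Finset.mem_image]
        exact ⟨r, Finset.mem_range.mpr hr, hir.symm⟩
      rw [this, zero_mul]
  have hroot : ∀ k, dft N x (2 * k + 1) = 0 → (ω ^ (2 * k + 1)) ∈ q.roots.toFinset := by
    intro k hk
    rw [Multiset.mem_toFinset, Polynomial.mem_roots hq0]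
    rw [hdft] at hk
    rcases mul_eq_zero.mp hk with h | h
    · exact absurd h (pow_ne_zero _ hω0)
    · exact h
  set F := (Finset.range (N / 2)).filter (fun k => dft N x (2 * k + 1) = 0) with hF
  have hcard : F.card ≤ m - 1 := by
    have hinj : ∀ k ∈ F, ∀ k' ∈ F, ω ^ (2 * k + 1) = ω ^ (2 * k' + 1) → k = k' := by
      intro k hk k' hk' he
      simp only [hF, Finset.mem_filter, Finset.mem_range] at hk hk'
      have h1 : 2 * k + 1 < N := by omega
      have h2 : 2 * k' + 1 < N := by omega
      have := hprim.pow_inj h1 h2 he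
      omega
    calc F.card ≤ q.roots.toFinset.card := by
          apply Finset.card_le_card_of_injOn (fun k => ω ^ (2 * k + 1))
          · intro k hk
            simp only [hF, Finset.mem_coe, Finset.mem_filter] at hk
            exact hroot k hk.2
          · intro k hk k' hk' he
            exact hinj k hk k' hk' he
      _ ≤ Multiset.card q.roots := Multiset.toFinset_card_le _
      _ ≤ q.natDegree := Polynomial.card_roots' q
      _ ≤ m - 1 := hdeg
  refine ⟨hcard, ?_⟩
  by_contra h
  push_neg at h
  have hFeq : F = Finset.range (N / 2) := by
    apply Finset.filter_true_of_mem
    intro k hk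
    exact h k (Finset.mem_range.mp hk)
  rw [hFeq, Finset.card_range] at hcard
  omega
end

section
/- Let x ∈ ℂ^N, N = 2^J, have support contained in a cyclic interval of length m ≤ 2^L with L < J-1. For each κ ∈ {0,...,2^{J-L-1}-1}, define ẑ^(κ) = (x̂_{2^{J-L-1}k + κ})_{k=0}^{2^{L+1}-1} and z^(κ) = F_{2^{L+1}}^{-1} ẑ^(κ). Then |z^(κ)_ℓ| = |x^(L+1)_ℓ| for all ℓ = 0,...,2^{L+1}-1, where x^(L+1) is the 2^{L+1}-periodization of x. -/
/-- Inverse DFT of length `2^{L+1}` applied to the `κ`-shifted subsampling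
`(x̂_{2^{J-L-1}k+κ})_{k<2^{L+1}}` of the DFT of `x ∈ ℂ^{2^J}`. -/
noncomputable def zvec (J L : ℕ) (x : ℕ → ℂ) (κ ℓ : ℕ) : ℂ :=
  (2 ^ (L + 1) : ℂ)⁻¹ * ∑ k ∈ Finset.range (2 ^ (L + 1)),
    dft (2 ^ J) x (2 ^ (J - L - 1) * k + κ) *
      Complex.exp (2 * Real.pi * Complex.I * ((k : ℂ) * ℓ) / 2 ^ (L + 1))

/-- Geometric sum of `M`-th roots of unity. -/
lemma sum_exp_eq (M : ℕ) (hM : 0 < M) (d : ℤ) :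
    ∑ k ∈ Finset.range M, Complex.exp (2 * Real.pi * Complex.I * (k * d) / M)
      = if (M:ℤ) ∣ d then (M:ℂ) else 0 := by
  have hMC : (M:ℂ) ≠ 0 := Nat.cast_ne_zero.2 hM.ne'
  have h2 : (2 * (Real.pi:ℂ) * Complex.I) ≠ 0 := by
    simp [Real.pi_ne_zero, Complex.I_ne_zero]
  have hexp : ∀ k : ℕ, Complex.exp (2 * Real.pi * Complex.I * (k * d) / M)
      = Complex.exp (2 * Real.pi * Complex.I * d / M) ^ k := by
    intro k
    rw [← Complex.exp_nat_mul]; ring_nf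
  simp_rw [hexp]
  set ω := Complex.exp (2 * Real.pi * Complex.I * d / M) with hω
  by_cases hdvd : (M:ℤ) ∣ d
  · obtain ⟨e, he⟩ := hdvd
    have : ω = 1 := by
      rw [hω, he]
      push_cast
      rw [show 2 * (Real.pi:ℂ) * Complex.I * ((M:ℂ) * e) / M = e * (2 * Real.pi * Complex.I) by
        field_simp]
      exact Complex.exp_int_mul_two_pi_mul_I e
    rw [if_pos ⟨e, he⟩]
    simp [this]
  · have hω1 : ω ≠ 1 := by
      intro h
      rw [hω, Complex.exp_eq_one_iff] at h
      obtain ⟨n, hn⟩ := h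
      apply hdvd
      refine ⟨n, ?_⟩
      have hd : (d : ℂ) = M * n := by
        field_simp at hn
        apply mul_left_cancel₀ h2
        rw [hn]
      exact_mod_cast hd
    rw [geom_sum_eq hω1]
    have hM1 : ω ^ M = 1 := by
      rw [hω, ← Complex.exp_nat_mul]
      rw [show (M:ℂ) * (2 * Real.pi * Complex.I * d / M) = d * (2 * Real.pi * Complex.I) by
        field_simp]
      exact Complex.exp_int_mul_two_pi_mul_I d
    simp [hM1, hdvd]

/-- Decomposition of a sum over `range (M*Q)`. -/
lemma sum_range_mul {β : Type*} [AddCommMonoid β] (M Q : ℕ) (f : ℕ → β) :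
    ∑ j ∈ Finset.range (M*Q), f j = ∑ t ∈ Finset.range Q, ∑ s ∈ Finset.range M, f (s + M*t) := by
  induction Q with
  | zero => simp
  | succ q ih =>
    rw [Finset.sum_range_succ, ← ih, Nat.mul_succ, Finset.sum_range_add]
    congr 1
    exact Finset.sum_congr rfl (fun s _ => by rw [Nat.add_comm (M*q) s])

/-- Explicit formula for `zvec` as a phase-modulated periodization. -/
lemma zvec_eq (J L : ℕ) (hL : L + 1 < J) (x : ℕ → ℂ) (κ ℓ : ℕ) (hℓ : ℓ < 2^(L+1)) :
    zvec J L x κ ℓ = ∑ t ∈ Finset.range (2^(J-L-1)),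
      x (ℓ + 2^(L+1) * t) *
        Complex.exp (-2 * Real.pi * Complex.I * (((ℓ + 2^(L+1)*t : ℕ) : ℂ) * κ) / 2^J) := by
  set M := 2^(L+1) with hMdef
  set Q := 2^(J-L-1) with hQdef
  have hNQ : 2^J = M * Q := by
    rw [hMdef, hQdef, ← pow_add]; congr 1; omega
  have hM0 : 0 < M := Nat.pow_pos (by norm_num)
  have hMC : (M:ℂ) ≠ 0 := Nat.cast_ne_zero.2 hM0.ne'
  have hQC : (Q:ℂ) ≠ 0 := Nat.cast_ne_zero.2 (Nat.pow_pos (by norm_num)).ne'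
  have hNC : (((2^J : ℕ)):ℂ) ≠ 0 := Nat.cast_ne_zero.2 (Nat.pow_pos (by norm_num)).ne'
  have hNQC : ((2^J : ℕ) : ℂ) = (M:ℂ) * (Q:ℂ) := by rw [hNQ]; push_cast; ring
  have step1 : zvec J L x κ ℓ = (M:ℂ)⁻¹ * ∑ j ∈ Finset.range (2^J),
      (x j * Complex.exp (-2*Real.pi*Complex.I*((j:ℂ)*(κ:ℂ))/((2^J : ℕ):ℂ))) *
      ∑ k ∈ Finset.range M, Complex.exp (2*Real.pi*Complex.I*((k:ℂ)*((((ℓ:ℤ)-(j:ℤ)) : ℤ):ℂ))/(M:ℂ)) := by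
    unfold zvec dft
    rw [show ((2:ℂ)^(L+1))⁻¹ = ((M:ℕ):ℂ)⁻¹ by push_cast [hMdef]; ring]
    congr 1
    simp_rw [Finset.sum_mul]
    rw [Finset.sum_comm]
    refine Finset.sum_congr rfl (fun j _ => ?_)
    rw [Finset.mul_sum]
    refine Finset.sum_congr rfl (fun k _ => ?_)
    calc x j * Complex.exp (-2 * Real.pi * Complex.I * ((j:ℂ) * ((Q * k + κ : ℕ):ℂ)) / ((2^J : ℕ):ℂ)) *
          Complex.exp (2 * Real.pi * Complex.I * ((k:ℂ) * (ℓ:ℂ)) / (2:ℂ)^(L+1))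
        = x j * Complex.exp (-2 * Real.pi * Complex.I * ((j:ℂ) * ((Q * k + κ : ℕ):ℂ)) / ((2^J : ℕ):ℂ)
            + 2 * Real.pi * Complex.I * ((k:ℂ) * (ℓ:ℂ)) / (2:ℂ)^(L+1)) := by
          rw [mul_assoc, ← Complex.exp_add]
      _ = x j * Complex.exp (-2*Real.pi*Complex.I*((j:ℂ)*(κ:ℂ))/((2^J : ℕ):ℂ)
            + 2*Real.pi*Complex.I*((k:ℂ)*((((ℓ:ℤ)-(j:ℤ)) : ℤ):ℂ))/(M:ℂ)) := by
          congr 1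
          rw [hNQC, show ((2:ℂ)^(L+1)) = (M:ℂ) by push_cast [hMdef]; ring]
          push_cast
          field_simp
          ring
      _ = _ := by rw [Complex.exp_add, ← mul_assoc]
  rw [step1]
  simp_rw [fun j => sum_exp_eq M hM0 ((ℓ:ℤ) - (j:ℤ))]
  rw [show Finset.range (2^J) = Finset.range (M*Q) from by rw [hNQ], sum_range_mul]
  have inner : ∀ t ∈ Finset.range Q,
      (∑ s ∈ Finset.range M, (x (s + M*t) *
        Complex.exp (-2*Real.pi*Complex.I*(((s + M*t : ℕ):ℂ)*(κ:ℂ))/((2^J : ℕ):ℂ))) *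
        (if (M:ℤ) ∣ ((ℓ:ℤ) - ((s + M*t : ℕ):ℤ)) then (M:ℂ) else 0))
      = (M:ℂ) * (x (ℓ + M*t) *
        Complex.exp (-2*Real.pi*Complex.I*(((ℓ + M*t : ℕ):ℂ)*(κ:ℂ))/((2^J : ℕ):ℂ))) := by
    intro t _
    rw [Finset.sum_eq_single_of_mem ℓ (Finset.mem_range.2 hℓ)]
    · rw [if_pos (by push_cast; exact ⟨-t, by ring⟩)]
      ring
    · intro s hs hne
      rw [if_neg, mul_zero]
      intro hd
      apply hne
      have hdvd2 : (M:ℤ) ∣ ((ℓ:ℤ) - (s:ℤ)) := by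
        obtain ⟨c, hc⟩ := hd
        exact ⟨c + t, by push_cast at hc ⊢; linarith⟩
      have hz := Int.eq_zero_of_abs_lt_dvd hdvd2 (by
        have := Finset.mem_range.1 hs
        rw [abs_lt]
        omega)
      omega
  rw [Finset.sum_congr rfl inner, ← Finset.mul_sum, ← mul_assoc, inv_mul_cancel₀ hMC, one_mul]
  refine Finset.sum_congr rfl (fun t _ => ?_)
  congr 1
  push_cast
  ring

/-- If at most one term of a sum is nonzero, unimodular phases don't change the absolute value. -/
lemma abs_sum_eq {ι : Type*} (S : Finset ι) (f g : ι → ℂ)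
    (hg : ∀ i ∈ S, ‖g i‖ = 1)
    (huniq : ∀ i ∈ S, ∀ j ∈ S, f i ≠ 0 → f j ≠ 0 → i = j) :
    ‖∑ i ∈ S, f i * g i‖ = ‖∑ i ∈ S, f i‖ := by
  by_cases hall : ∀ i ∈ S, f i = 0
  · rw [Finset.sum_eq_zero (fun i hi => by rw [hall i hi, zero_mul]),
      Finset.sum_eq_zero hall]
  · push_neg at hall
    obtain ⟨i₀, hi₀, hf₀⟩ := hall
    rw [Finset.sum_eq_single_of_mem i₀ hi₀
        (fun j hj hne => by
          by_contra h
          exact hne (huniq j hj i₀ hi₀ (left_ne_zero_of_mul h) hf₀)),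
      Finset.sum_eq_single_of_mem i₀ hi₀
        (fun j hj hne => by
          by_contra h
          exact hne (huniq j hj i₀ hi₀ h hf₀))]
    rw [norm_mul, hg i₀ hi₀, mul_one]

/-- Under the support hypothesis, at most one index of each periodization class carries
a nonzero entry. -/
lemma uniq_index (J L m μ : ℕ) (hL : L + 1 < J) (hm : m ≤ 2 ^ L) (x : ℕ → ℂ)
    (hsupp : ∀ k < 2 ^ J, (∀ r < m, k ≠ (μ + r) % 2 ^ J) → x k = 0)
    (ℓ : ℕ) (hℓ : ℓ < 2^(L+1)) (t₁ t₂ : ℕ) (ht₁ : t₁ < 2^(J-L-1)) (ht₂ : t₂ < 2^(J-L-1))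
    (h₁ : x (ℓ + 2^(L+1)*t₁) ≠ 0) (h₂ : x (ℓ + 2^(L+1)*t₂) ≠ 0) : t₁ = t₂ := by
  set M := 2^(L+1) with hMdef
  set Q := 2^(J-L-1) with hQdef
  have hNQ : 2^J = M * Q := by rw [hMdef, hQdef, ← pow_add]; congr 1; omega
  have hM0 : 0 < M := Nat.pow_pos (by norm_num)
  have hQ0 : 0 < Q := Nat.pow_pos (by norm_num)
  have hlt : ∀ t, t < Q → ℓ + M*t < 2^J := by
    intro t ht
    rw [hNQ]
    calc ℓ + M*t < M + M*t := by omega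
      _ = M * (t+1) := by ring
      _ ≤ M * Q := Nat.mul_le_mul_left _ (by omega)
  have key : ∀ t, t < Q → x (ℓ + M*t) ≠ 0 → ∃ r < m, ℓ + M*t = (μ + r) % 2^J := by
    intro t ht hx
    by_contra h
    push_neg at h
    exact hx (hsupp _ (hlt t ht) (fun r hr => h r hr))
  obtain ⟨r₁, hr₁, he₁⟩ := key t₁ ht₁ h₁
  obtain ⟨r₂, hr₂, he₂⟩ := key t₂ ht₂ h₂
  have hmod₁ : (ℓ + M*t₁) ≡ (μ + r₁) [MOD 2^J] := by
    rw [he₁]; exact Nat.mod_modEq _ _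
  have hmod₂ : (ℓ + M*t₂) ≡ (μ + r₂) [MOD 2^J] := by
    rw [he₂]; exact Nat.mod_modEq _ _
  have hD : ((2^J : ℕ):ℤ) ∣ ((M:ℤ)*((t₂:ℤ) - t₁) + ((r₁:ℤ) - r₂)) := by
    have h := (hmod₁.add hmod₂.symm).dvd
    convert h using 1
    push_cast
    ring
  have hMdvdN : (M:ℤ) ∣ ((2^J : ℕ):ℤ) := by
    rw [hNQ]; push_cast; exact ⟨Q, rfl⟩
  have hMr : (M:ℤ) ∣ ((r₁:ℤ) - r₂) := by
    have h1 : (M:ℤ) ∣ ((M:ℤ)*((t₂:ℤ) - t₁) + ((r₁:ℤ) - r₂)) := hMdvdN.trans hD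
    have h2 : (M:ℤ) ∣ (M:ℤ)*((t₂:ℤ) - t₁) := ⟨_, rfl⟩
    simpa using h1.sub h2
  have hM2 : M = 2^L * 2 := pow_succ 2 L
  have hrz : (r₁:ℤ) - r₂ = 0 := by
    refine Int.eq_zero_of_abs_lt_dvd hMr ?_
    rw [abs_lt]
    omega
  have hDt : ((M:ℤ) * (Q:ℤ)) ∣ ((M:ℤ)*((t₂:ℤ) - t₁)) := by
    have : ((2^J : ℕ):ℤ) = (M:ℤ) * Q := by rw [hNQ]; push_cast; ring
    rw [← this]
    simpa [hrz] using hD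
  obtain ⟨c, hc⟩ := hDt
  have hMZ : (M:ℤ) ≠ 0 := by positivity
  have ht : (t₂:ℤ) - t₁ = Q * c := by
    apply mul_left_cancel₀ hMZ
    rw [hc]; ring
  have : (t₂:ℤ) - t₁ = 0 := by
    refine Int.eq_zero_of_abs_lt_dvd ⟨c, ht⟩ ?_
    rw [abs_lt]
    omega
  omega

/-- For `x` supported in a cyclic interval of length `m ≤ 2^L`, each shifted subsampled
inverse DFT `z^{(κ)}` satisfies `|z^{(κ)}_ℓ| = |x^{(L+1)}_ℓ|`. -/
theorem zvec_abs_eq_perio (J L m μ κ : ℕ) (hL : L + 1 < J) (hm : m ≤ 2 ^ L)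
    (hκ : κ < 2 ^ (J - L - 1)) (x : ℕ → ℂ)
    (hsupp : ∀ k < 2 ^ J, (∀ r < m, k ≠ (μ + r) % 2 ^ J) → x k = 0) :
    ∀ ℓ < 2 ^ (L + 1),
      ‖zvec J L x κ ℓ‖ = ‖perio x J (L + 1) ℓ‖ := by
  intro ℓ hℓ
  rw [zvec_eq J L hL x κ ℓ hℓ]
  unfold perio
  rw [show J - (L+1) = J - L - 1 from by omega]
  refine abs_sum_eq (Finset.range (2^(J-L-1)))
    (fun t => x (ℓ + 2^(L+1)*t))
    (fun t => Complex.exp (-2 * Real.pi * Complex.I * (((ℓ + 2^(L+1)*t : ℕ) : ℂ) * κ) / 2^J))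
    ?_ ?_
  · intro t _
    rw [show (-2 * (Real.pi:ℂ) * Complex.I * (((ℓ + 2^(L+1)*t : ℕ) : ℂ) * κ) / 2^J)
        = ((-2 * Real.pi * (((ℓ + 2^(L+1)*t : ℕ) : ℝ) * κ) / 2^J : ℝ) : ℂ) * Complex.I by
      push_cast; ring]
    exact Complex.norm_exp_ofReal_mul_I _
  · intro t₁ ht₁ t₂ ht₂ h₁ h₂
    exact uniq_index J L m μ hL hm x hsupp ℓ hℓ t₁ t₂
      (Finset.mem_range.1 ht₁) (Finset.mem_range.1 ht₂) h₁ h₂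
end

section
/- Let x ∈ ℂ^N, N = 2^J, have support contained in a cyclic interval of length m < 2^{L+1}. For κ ∈ {0,...,2^{J-L-1}-1}, let z^(κ) = F_{2^{L+1}}^{-1} (x̂_{2^{J-L-1}k+κ})_{k=0}^{2^{L+1}-1}. Then for each ℓ ∈ {0,...,2^{L+1}-1}, z^(κ)_ℓ = Σ_{j=0}^{2^{J-L-1}-1} x_{ℓ+2^{L+1}j} ω_N^{(ℓ+2^{L+1}j)κ}, where ω_N = e^{-2πi/N}. -/
lemma orth (M : ℕ) (hM : 0 < M) (d : ℤ) :
    ∑ k ∈ Finset.range M, Complex.exp (2 * Real.pi * Complex.I * k * d / M)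
      = if (M : ℤ) ∣ d then (M : ℂ) else 0 := by
  have hM0 : (M : ℂ) ≠ 0 := Nat.cast_ne_zero.mpr hM.ne'
  have hterm : ∀ k : ℕ, Complex.exp (2 * Real.pi * Complex.I * k * d / M)
      = (Complex.exp (2 * Real.pi * Complex.I * d / M)) ^ k := by
    intro k
    rw [← Complex.exp_nat_mul]
    congr 1
    ring
  simp_rw [hterm]
  by_cases h : (M : ℤ) ∣ d
  · obtain ⟨c, rfl⟩ := h
    have h1 : Complex.exp (2 * Real.pi * Complex.I * ((M : ℤ) * c : ℤ) / M) = 1 := by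
      rw [← Complex.exp_int_mul_two_pi_mul_I c]
      congr 1
      push_cast
      field_simp
    rw [h1, if_pos ⟨c, rfl⟩]
    simp
  · rw [if_neg h]
    have hr1 : Complex.exp (2 * Real.pi * Complex.I * d / M) ≠ 1 := by
      intro hc
      rw [Complex.exp_eq_one_iff] at hc
      obtain ⟨n, hn⟩ := hc
      apply h
      have h2 : (d : ℂ) = n * M := by
        have h2pi : (2 * (Real.pi : ℂ) * Complex.I) ≠ 0 := by
          simp [Real.pi_ne_zero, Complex.I_ne_zero, Complex.ofReal_ne_zero]
        field_simp at hn
        have : (d : ℂ) * (2 * (Real.pi : ℂ) * Complex.I) = (n : ℂ) * (M : ℂ) * (2 * (Real.pi : ℂ) * Complex.I) := by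
          rw [show ((d : ℂ)) * (2 * (Real.pi : ℂ) * Complex.I) = 2 * (Real.pi : ℂ) * Complex.I * d by ring, hn]; ring
        exact mul_right_cancel₀ h2pi this
      have : d = n * M := by exact_mod_cast h2
      exact ⟨n, by linarith [this]⟩
    rw [geom_sum_eq hr1]
    have hrM : Complex.exp (2 * Real.pi * Complex.I * d / M) ^ M = 1 := by
      rw [← Complex.exp_nat_mul]
      rw [show (M : ℂ) * (2 * Real.pi * Complex.I * d / M) = d * (2 * Real.pi * Complex.I) by
        field_simp]
      exact Complex.exp_int_mul_two_pi_mul_I d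
    rw [hrM]
    simp

/-- Explicit formula for the shifted subsampled inverse DFT:
`z^{(κ)}_ℓ = ∑_j x_{ℓ+2^{L+1}j} ω_N^{(ℓ+2^{L+1}j)κ}`. -/
theorem zvec_formula (J L m μ κ : ℕ) (hL : L + 1 ≤ J) (hm : m < 2 ^ (L + 1))
    (hκ : κ < 2 ^ (J - L - 1)) (x : ℕ → ℂ)
    (hsupp : ∀ k < 2 ^ J, (∀ r < m, k ≠ (μ + r) % 2 ^ J) → x k = 0) :
    ∀ ℓ < 2 ^ (L + 1),
      zvec J L x κ ℓ = ∑ j ∈ Finset.range (2 ^ (J - L - 1)),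
        x (ℓ + 2 ^ (L + 1) * j) *
          Complex.exp (-2 * Real.pi * Complex.I *
            (((ℓ + 2 ^ (L + 1) * j : ℕ) : ℂ) * κ) / 2 ^ J) := by
  intro ℓ hℓ
  have hMpos : 0 < 2 ^ (L + 1) := Nat.pow_pos (by norm_num)
  have hMT : 2 ^ (L + 1) * 2 ^ (J - L - 1) = 2 ^ J := by
    rw [← pow_add]; congr 1; omega
  have hM0 : ((2 ^ (L + 1) : ℕ) : ℂ) ≠ 0 := Nat.cast_ne_zero.mpr hMpos.ne'
  have hN0 : ((2 : ℂ) ^ J) ≠ 0 := pow_ne_zero _ two_ne_zero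
  have hNsplit : ((2 : ℂ) ^ J) = 2 ^ (L + 1) * 2 ^ (J - L - 1) := by
    rw [← pow_add]; congr 1; omega
  have step1 : zvec J L x κ ℓ = ∑ j ∈ Finset.range (2 ^ J),
      ((2 ^ (L + 1) : ℕ) : ℂ)⁻¹ *
        (x j * Complex.exp (-2 * Real.pi * Complex.I * ((j : ℂ) * (κ : ℂ)) / (2 : ℂ) ^ J) *
          ∑ k ∈ Finset.range (2 ^ (L + 1)),
            Complex.exp (2 * Real.pi * Complex.I * (k : ℂ) *
              ((((ℓ : ℤ) - (j : ℤ)) : ℤ) : ℂ) / ((2 ^ (L + 1) : ℕ) : ℂ))) := by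
    rw [zvec]
    simp only [dft, Finset.sum_mul, Finset.mul_sum]
    rw [Finset.sum_comm]
    refine Finset.sum_congr rfl fun j hj => ?_
    refine Finset.sum_congr rfl fun k hk => ?_
    push_cast
    rw [mul_assoc (x j), mul_assoc (x j), ← Complex.exp_add, ← Complex.exp_add,
      ← mul_assoc _ (x j), mul_comm _ (x j), mul_assoc (x j), mul_comm (x j), mul_assoc,
      mul_comm (x j)]
    congr 2
    rw [hNsplit]
    field_simp
    ring
  rw [step1]
  have step2 : ∀ j ∈ Finset.range (2 ^ J),
      ((2 ^ (L + 1) : ℕ) : ℂ)⁻¹ *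
        (x j * Complex.exp (-2 * Real.pi * Complex.I * ((j : ℂ) * (κ : ℂ)) / (2 : ℂ) ^ J) *
          ∑ k ∈ Finset.range (2 ^ (L + 1)),
            Complex.exp (2 * Real.pi * Complex.I * (k : ℂ) *
              ((((ℓ : ℤ) - (j : ℤ)) : ℤ) : ℂ) / ((2 ^ (L + 1) : ℕ) : ℂ)))
      = if ((2 ^ (L + 1) : ℕ) : ℤ) ∣ ((ℓ : ℤ) - (j : ℤ)) then
          x j * Complex.exp (-2 * Real.pi * Complex.I * ((j : ℂ) * (κ : ℂ)) / (2 : ℂ) ^ J)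
        else 0 := by
    intro j hj
    rw [orth _ hMpos]
    split_ifs with h
    · field_simp
    · simp
  rw [Finset.sum_congr rfl step2, ← Finset.sum_filter]
  refine (Finset.sum_nbij' (i := fun t => ℓ + 2 ^ (L + 1) * t)
    (j := fun a => (a - ℓ) / 2 ^ (L + 1)) ?_ ?_ ?_ ?_ ?_).symm
  · intro t ht
    simp only [Finset.mem_filter, Finset.mem_range] at *
    constructor
    · calc ℓ + 2 ^ (L + 1) * t < 2 ^ (L + 1) + 2 ^ (L + 1) * t := by omega
        _ = 2 ^ (L + 1) * (t + 1) := by ring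
        _ ≤ 2 ^ (L + 1) * 2 ^ (J - L - 1) := Nat.mul_le_mul_left _ (by omega)
        _ = 2 ^ J := hMT
    · exact ⟨-t, by push_cast; ring⟩
  · intro a ha
    simp only [Finset.mem_filter, Finset.mem_range] at *
    obtain ⟨haN, hdvd⟩ := ha
    have hmod : a % 2 ^ (L + 1) = ℓ := by
      obtain ⟨c, hc⟩ := hdvd
      have : (a : ℤ) % (2 ^ (L + 1) : ℕ) = (ℓ : ℤ) % (2 ^ (L + 1) : ℕ) := by
        conv_lhs => rw [show (a : ℤ) = (ℓ : ℤ) - (2 ^ (L + 1) : ℕ) * c by omega]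
        rw [sub_eq_add_neg, ← mul_neg, Int.add_mul_emod_self_left]
      have h2 : a % 2 ^ (L + 1) = ℓ % 2 ^ (L + 1) := by exact_mod_cast this
      rw [h2, Nat.mod_eq_of_lt hℓ]
    have hsplit : a = 2 ^ (L + 1) * (a / 2 ^ (L + 1)) + ℓ := by
      conv_lhs => rw [← Nat.div_add_mod a (2 ^ (L + 1))]
      rw [hmod]
    have : (a - ℓ) / 2 ^ (L + 1) = a / 2 ^ (L + 1) := by
      rw [show a - ℓ = 2 ^ (L + 1) * (a / 2 ^ (L + 1)) by omega,
        Nat.mul_div_cancel_left _ hMpos]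
    rw [this]
    have : 2 ^ (L + 1) * (a / 2 ^ (L + 1)) < 2 ^ (L + 1) * 2 ^ (J - L - 1) := by
      rw [hMT]; omega
    exact Nat.lt_of_mul_lt_mul_left this
  · intro t ht
    show (ℓ + 2 ^ (L + 1) * t - ℓ) / 2 ^ (L + 1) = t
    rw [Nat.add_sub_cancel_left, Nat.mul_div_cancel_left _ hMpos]
  · intro a ha
    simp only [Finset.mem_filter, Finset.mem_range] at ha
    obtain ⟨haN, hdvd⟩ := ha
    have hmod : a % 2 ^ (L + 1) = ℓ := by
      obtain ⟨c, hc⟩ := hdvd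
      have : (a : ℤ) % (2 ^ (L + 1) : ℕ) = (ℓ : ℤ) % (2 ^ (L + 1) : ℕ) := by
        conv_lhs => rw [show (a : ℤ) = (ℓ : ℤ) - (2 ^ (L + 1) : ℕ) * c by omega]
        rw [sub_eq_add_neg, ← mul_neg, Int.add_mul_emod_self_left]
      have h2 : a % 2 ^ (L + 1) = ℓ % 2 ^ (L + 1) := by exact_mod_cast this
      rw [h2, Nat.mod_eq_of_lt hℓ]
    have hsplit : a = 2 ^ (L + 1) * (a / 2 ^ (L + 1)) + ℓ := by
      conv_lhs => rw [← Nat.div_add_mod a (2 ^ (L + 1))]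
      rw [hmod]
    show ℓ + 2 ^ (L + 1) * ((a - ℓ) / 2 ^ (L + 1)) = a
    rw [show a - ℓ = 2 ^ (L + 1) * (a / 2 ^ (L + 1)) by omega,
      Nat.mul_div_cancel_left _ hMpos]
    omega
  · intro t ht
    push_cast
    ring
end

section
/- Let x ∈ ℂ^N, N = 2^J, have support contained in a cyclic interval of length m ≤ 2^L, and let L+1 ≤ j ≤ J-1. If x^(j) has support in {(μ^(j)+r) mod 2^j : r = 0,...,m-1}, then x^(j+1) has support in {(μ^(j)+r) mod 2^{j+1} : r=0,...,m-1} or in {(μ^(j)+2^j+r) mod 2^{j+1} : r=0,...,m-1}; in these respective cases x^(j+1)_{(μ^(j)+ℓ) mod 2^{j+1}} = x^(j)_{(μ^(j)+ℓ) mod 2^j} or x^(j+1)_{(μ^(j)+2^j+ℓ) mod 2^{j+1}} = x^(j)_{(μ^(j)+ℓ) mod 2^j} for ℓ = 0,...,m-1. -/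
private lemma sum_two_mul (f : ℕ → ℂ) (n : ℕ) :
    ∑ i ∈ Finset.range (2 * n), f i
      = ∑ i ∈ Finset.range n, f (2 * i) + ∑ i ∈ Finset.range n, f (2 * i + 1) := by
  induction n with
  | zero => simp
  | succ n ih =>
    have h : 2 * (n + 1) = (2 * n + 1) + 1 := by ring
    rw [h, Finset.sum_range_succ, Finset.sum_range_succ, ih,
      Finset.sum_range_succ, Finset.sum_range_succ]
    ring

private lemma perio_split (x : ℕ → ℂ) (J j k : ℕ) (h : j + 1 ≤ J) :
    perio x J j k = perio x J (j + 1) k + perio x J (j + 1) (k + 2 ^ j) := by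
  unfold perio
  have h1 : J - j = (J - (j + 1)) + 1 := by omega
  rw [h1, pow_succ, mul_comm ((2:ℕ) ^ (J - (j + 1))) 2, sum_two_mul]
  congr 1
  · apply Finset.sum_congr rfl; intro i _; congr 1; ring
  · apply Finset.sum_congr rfl; intro i _; congr 1; ring

private lemma perio_supp (J j' m μ : ℕ) (hj : j' ≤ J) (x : ℕ → ℂ)
    (hsupp : ∀ k < 2 ^ J, (∀ r < m, k ≠ (μ + r) % 2 ^ J) → x k = 0)
    (k : ℕ) (hk : k < 2 ^ j') (hne : ∀ r < m, k ≠ (μ + r) % 2 ^ j') :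
    perio x J j' k = 0 := by
  unfold perio
  apply Finset.sum_eq_zero
  intro ℓ hℓ
  simp only [Finset.mem_range] at hℓ
  apply hsupp
  · have h1 : 2 ^ j' * (ℓ + 1) ≤ 2 ^ j' * 2 ^ (J - j') :=
      Nat.mul_le_mul_left _ (by omega)
    have h2 : 2 ^ j' * 2 ^ (J - j') = 2 ^ J := by
      rw [← pow_add]; congr 1; omega
    have h3 : 2 ^ j' * (ℓ + 1) = 2 ^ j' * ℓ + 2 ^ j' := by ring
    omega
  · intro r hr heq
    apply hne r hr
    have hd : (2:ℕ) ^ j' ∣ 2 ^ J := pow_dvd_pow 2 hj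
    have h1 : (k + 2 ^ j' * ℓ) % 2 ^ j' = k := by
      rw [Nat.add_mul_mod_self_left, Nat.mod_eq_of_lt hk]
    have h2 := congrArg (· % 2 ^ j') heq
    rw [h1, Nat.mod_mod_of_dvd _ hd] at h2
    exact h2

private lemma mem_pair (j u a : ℕ) (ha : a < 2 ^ j) (hu : u < 2 ^ (j + 1))
    (hmod : u % 2 ^ j = a) : u = a ∨ u = a + 2 ^ j := by
  have hd := Nat.div_add_mod u (2 ^ j)
  have hlt : u / 2 ^ j < 2 := Nat.div_lt_of_lt_mul (by rw [← pow_succ]; exact hu)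
  rw [hmod] at hd
  have h2 : u / 2 ^ j = 0 ∨ u / 2 ^ j = 1 := by interval_cases h : u / 2 ^ j <;> simp
  rcases h2 with h | h <;> rw [h] at hd <;> omega

private lemma shift_ne (j t : ℕ) : (t + 2 ^ j) % 2 ^ (j + 1) ≠ t % 2 ^ (j + 1) := by
  intro h
  have h1 : t ≡ t + 2 ^ j [MOD 2 ^ (j + 1)] := h.symm
  have h2 := (Nat.modEq_iff_dvd' (Nat.le_add_right _ _)).mp h1
  simp only [Nat.add_sub_cancel_left] at h2
  have h3 := Nat.le_of_dvd (by positivity) h2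
  have h4 : (2:ℕ) ^ j < 2 ^ (j + 1) := Nat.pow_lt_pow_right (by norm_num) (by omega)
  omega

private lemma lift_cases (j t k : ℕ) (hk : k < 2 ^ (j + 1)) (hmod : k % 2 ^ j = t % 2 ^ j) :
    k = t % 2 ^ (j + 1) ∨ k = (t + 2 ^ j) % 2 ^ (j + 1) := by
  have hpos : (0:ℕ) < 2 ^ j := by positivity
  have hd : (2:ℕ) ^ j ∣ 2 ^ (j + 1) := pow_dvd_pow 2 (by omega)
  have ha : t % 2 ^ j < 2 ^ j := Nat.mod_lt _ hpos
  have hb := mem_pair j (t % 2 ^ (j + 1)) (t % 2 ^ j) ha (Nat.mod_lt _ (by positivity))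
    (Nat.mod_mod_of_dvd _ hd)
  have hcmod : (t + 2 ^ j) % 2 ^ (j + 1) % 2 ^ j = t % 2 ^ j := by
    rw [Nat.mod_mod_of_dvd _ hd, Nat.add_mod_right]
  have hc := mem_pair j ((t + 2 ^ j) % 2 ^ (j + 1)) (t % 2 ^ j) ha
    (Nat.mod_lt _ (by positivity)) hcmod
  have hk' := mem_pair j k (t % 2 ^ j) ha hk hmod
  have hne := shift_ne j t
  rcases hk' with h | h <;> rcases hb with h1 | h1 <;> rcases hc with h2 | h2 <;> omega

private lemma mod_add_cong {M a b : ℕ} (c : ℕ) (h : a % M = b % M) :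
    (a + c) % M = (b + c) % M := by
  rw [Nat.add_mod a c, h, ← Nat.add_mod]

private lemma cancel_bound {M μ u v a b : ℕ} (h : a % M = b % M) (ea : a = μ + u)
    (eb : b = μ + v) (hu : u < M) (hv : v < M) : u = v := by
  subst ea; subst eb
  have h2 : u ≡ v [MOD M] := Nat.ModEq.add_left_cancel' μ h
  rwa [Nat.ModEq, Nat.mod_eq_of_lt hu, Nat.mod_eq_of_lt hv] at h2

section aux
variable (J j m μ ν : ℕ) (x : ℕ → ℂ)

private lemma aux_supp (hmP : m ≤ 2 ^ (j - 1)) (hj1 : 1 ≤ j) (hj2 : j + 1 ≤ J)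
    (hsupp : ∀ k < 2 ^ J, (∀ r < m, k ≠ (μ + r) % 2 ^ J) → x k = 0)
    (hperioj : ∀ k < 2 ^ j, (∀ r < m, k ≠ (ν + r) % 2 ^ j) → perio x J j k = 0)
    (hV : ∀ r < m, perio x J (j + 1) ((ν + r) % 2 ^ (j + 1)) = 0) :
    ∀ k < 2 ^ (j + 1), (∀ r < m, k ≠ (ν + 2 ^ j + r) % 2 ^ (j + 1)) →
      perio x J (j + 1) k = 0 := by
  intro k hk hk1
  have hpos : (0:ℕ) < 2 ^ j := by positivity
  have e1 : (2:ℕ) ^ j = 2 * 2 ^ (j - 1) := by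
    rw [← pow_succ']; congr 1; omega
  have e2 : (2:ℕ) ^ (j + 1) = 2 * 2 ^ j := by rw [pow_succ]; ring
  by_cases hk0 : ∃ r, r < m ∧ k = (ν + r) % 2 ^ (j + 1)
  · obtain ⟨r, hr, hkr⟩ := hk0; rw [hkr]; exact hV r hr
  push_neg at hk0
  by_cases hkS : ∀ s < m, k ≠ (μ + s) % 2 ^ (j + 1)
  · exact perio_supp J (j + 1) m μ hj2 x hsupp k hk hkS
  push_neg at hkS
  obtain ⟨s0, hs0, hks0⟩ := hkS
  have haj : ∀ r < m, k % 2 ^ j ≠ (ν + r) % 2 ^ j := by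
    intro r hr heq
    rcases lift_cases j (ν + r) k hk heq with h | h
    · exact hk0 r hr h
    · apply hk1 r hr; rw [h]; congr 1; ring
  have hpa : perio x J j (k % 2 ^ j) = 0 := hperioj _ (Nat.mod_lt _ hpos) haj
  have hsplit := perio_split x J j (k % 2 ^ j) hj2
  have hka := mem_pair j k (k % 2 ^ j) (Nat.mod_lt _ hpos) hk rfl
  have hother : ∀ u, u < 2 ^ (j + 1) → u % 2 ^ j = k % 2 ^ j → u ≠ k →
      perio x J (j + 1) u = 0 := by
    intro u hu hua hukne
    apply perio_supp J (j + 1) m μ hj2 x hsupp u hu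
    intro s1 hs1 hus1
    have hku := mem_pair j k (k % 2 ^ j) (Nat.mod_lt _ hpos) hk rfl
    have huu := mem_pair j u (k % 2 ^ j) (Nat.mod_lt _ hpos) hu hua
    have hkM : k % 2 ^ (j + 1) = k := Nat.mod_eq_of_lt hk
    have huM : u % 2 ^ (j + 1) = u := Nat.mod_eq_of_lt hu
    rcases hku with h | h <;> rcases huu with h' | h'
    · omega
    · -- k = a, u = a + 2^j : u = k + 2^j
      have t0 : (μ + s0) % 2 ^ (j + 1) = k % 2 ^ (j + 1) := by rw [hkM, hks0]
      have t1 : (μ + s0 + 2 ^ j) % 2 ^ (j + 1) = (k + 2 ^ j) % 2 ^ (j + 1) :=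
        mod_add_cong _ t0
      have t2 : (μ + s0 + 2 ^ j) % 2 ^ (j + 1) = (μ + s1) % 2 ^ (j + 1) := by
        rw [t1, show k + 2 ^ j = u from by omega, huM, hus1]
      have := cancel_bound t2 (show μ + s0 + 2 ^ j = μ + (s0 + 2 ^ j) from by ring)
        rfl (by omega) (by omega)
      omega
    · -- k = a + 2^j, u = a : k = u + 2^j
      have t0 : (μ + s1) % 2 ^ (j + 1) = u % 2 ^ (j + 1) := by rw [huM, hus1]
      have t1 : (μ + s1 + 2 ^ j) % 2 ^ (j + 1) = (u + 2 ^ j) % 2 ^ (j + 1) :=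
        mod_add_cong _ t0
      have t2 : (μ + s1 + 2 ^ j) % 2 ^ (j + 1) = (μ + s0) % 2 ^ (j + 1) := by
        rw [t1, show u + 2 ^ j = k from by omega, hkM, hks0]
      have := cancel_bound t2 (show μ + s1 + 2 ^ j = μ + (s1 + 2 ^ j) from by ring)
        rfl (by omega) (by omega)
      omega
    · omega
  rcases hka with h | h
  · have h0 : perio x J (j + 1) (k % 2 ^ j + 2 ^ j) = 0 := by
      apply hother
      · omega
      · rw [Nat.add_mod_right, Nat.mod_mod_of_dvd _ dvd_rfl]
      · omega
    rw [hpa, h0, add_zero] at hsplit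
    rw [show k = k % 2 ^ j from h]
    exact hsplit.symm
  · have h0 : perio x J (j + 1) (k % 2 ^ j) = 0 := by
      apply hother
      · omega
      · rw [Nat.mod_mod_of_dvd _ dvd_rfl]
      · omega
    rw [hpa, h0, zero_add] at hsplit
    rw [show k = k % 2 ^ j + 2 ^ j from h]
    exact hsplit.symm

private lemma aux_val (hj2 : j + 1 ≤ J)
    (hV : ∀ r < m, perio x J (j + 1) ((ν + r) % 2 ^ (j + 1)) = 0) :
    ∀ ℓ < m, perio x J (j + 1) ((ν + 2 ^ j + ℓ) % 2 ^ (j + 1)) =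
      perio x J j ((ν + ℓ) % 2 ^ j) := by
  intro ℓ hℓ
  have hpos : (0:ℕ) < 2 ^ j := by positivity
  have hd : (2:ℕ) ^ j ∣ 2 ^ (j + 1) := pow_dvd_pow 2 (by omega)
  have ha : (ν + ℓ) % 2 ^ j < 2 ^ j := Nat.mod_lt _ hpos
  have hsplit := perio_split x J j ((ν + ℓ) % 2 ^ j) hj2
  have hbmod : (ν + 2 ^ j + ℓ) % 2 ^ (j + 1) % 2 ^ j = (ν + ℓ) % 2 ^ j := by
    rw [Nat.mod_mod_of_dvd _ hd, show ν + 2 ^ j + ℓ = ν + ℓ + 2 ^ j from by ring,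
      Nat.add_mod_right]
  have hcmod : (ν + ℓ) % 2 ^ (j + 1) % 2 ^ j = (ν + ℓ) % 2 ^ j :=
    Nat.mod_mod_of_dvd _ hd
  have hb := mem_pair j ((ν + 2 ^ j + ℓ) % 2 ^ (j + 1)) _ ha
    (Nat.mod_lt _ (by positivity)) hbmod
  have hc := mem_pair j ((ν + ℓ) % 2 ^ (j + 1)) _ ha (Nat.mod_lt _ (by positivity)) hcmod
  have hbc : (ν + 2 ^ j + ℓ) % 2 ^ (j + 1) ≠ (ν + ℓ) % 2 ^ (j + 1) := by
    rw [show ν + 2 ^ j + ℓ = ν + ℓ + 2 ^ j from by ring]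
    exact shift_ne j (ν + ℓ)
  have h0 : perio x J (j + 1) ((ν + ℓ) % 2 ^ (j + 1)) = 0 := hV ℓ hℓ
  rcases hb with hb | hb <;> rcases hc with hc | hc
  · exact absurd (hb.trans hc.symm) hbc
  · rw [hsplit, hb, ← hc, h0, add_zero]
  · rw [hsplit, hb, ← hc, h0, zero_add]
  · exact absurd (hb.trans hc.symm) hbc

end aux

/-- If `x^{(j)}` is supported in the cyclic interval starting at `μ^{(j)}` of length `m`,
then `x^{(j+1)}` is supported in the corresponding interval starting at `μ^{(j)}` or at
`μ^{(j)} + 2^j`, with matching values. -/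
theorem perio_support_lift (J L j m μ μj : ℕ) (hm : m ≤ 2 ^ L) (hj1 : L + 1 ≤ j)
    (hj2 : j + 1 ≤ J) (x : ℕ → ℂ)
    (hsupp : ∀ k < 2 ^ J, (∀ r < m, k ≠ (μ + r) % 2 ^ J) → x k = 0)
    (hsuppj : ∀ k < 2 ^ j, (∀ r < m, k ≠ (μj + r) % 2 ^ j) → perio x J j k = 0) :
    ((∀ k < 2 ^ (j + 1), (∀ r < m, k ≠ (μj + r) % 2 ^ (j + 1)) → perio x J (j + 1) k = 0) ∧
      ∀ ℓ < m, perio x J (j + 1) ((μj + ℓ) % 2 ^ (j + 1)) = perio x J j ((μj + ℓ) % 2 ^ j)) ∨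
    ((∀ k < 2 ^ (j + 1),
        (∀ r < m, k ≠ (μj + 2 ^ j + r) % 2 ^ (j + 1)) → perio x J (j + 1) k = 0) ∧
      ∀ ℓ < m,
        perio x J (j + 1) ((μj + 2 ^ j + ℓ) % 2 ^ (j + 1)) =
          perio x J j ((μj + ℓ) % 2 ^ j)) := by
  have hpos : (0:ℕ) < 2 ^ j := by positivity
  have hMpos : (0:ℕ) < 2 ^ (j + 1) := by positivity
  have e1 : (2:ℕ) ^ j = 2 * 2 ^ (j - 1) := by rw [← pow_succ']; congr 1; omega
  have e2 : (2:ℕ) ^ (j + 1) = 2 * 2 ^ j := by rw [pow_succ]; ring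
  have hmP : m ≤ 2 ^ (j - 1) :=
    hm.trans (Nat.pow_le_pow_right (by norm_num) (by omega))
  by_cases hA : ∀ r < m, perio x J (j + 1) ((μj + 2 ^ j + r) % 2 ^ (j + 1)) = 0
  · -- support in the first interval
    left
    have eshift : ∀ r : ℕ, (μj + 2 ^ j + 2 ^ j + r) % 2 ^ (j + 1) = (μj + r) % 2 ^ (j + 1) := by
      intro r
      rw [show μj + 2 ^ j + 2 ^ j + r = μj + r + 2 ^ (j + 1) from by
        rw [e2]; ring, Nat.add_mod_right]
    have hperioj' : ∀ k < 2 ^ j, (∀ r < m, k ≠ (μj + 2 ^ j + r) % 2 ^ j) →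
        perio x J j k = 0 := by
      intro k hk h
      apply hsuppj k hk
      intro r hr
      have : (μj + 2 ^ j + r) % 2 ^ j = (μj + r) % 2 ^ j := by
        rw [show μj + 2 ^ j + r = μj + r + 2 ^ j from by ring, Nat.add_mod_right]
      rw [← this]
      exact h r hr
    constructor
    · intro k hk hne
      apply aux_supp J j m μ (μj + 2 ^ j) x hmP (by omega) hj2 hsupp hperioj' hA k hk
      intro r hr
      rw [eshift r]
      exact hne r hr
    · intro ℓ hℓ
      have := aux_val J j m (μj + 2 ^ j) x hj2 hA ℓ hℓ
      rw [eshift ℓ] at this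
      rw [this]
      congr 1
      rw [show μj + 2 ^ j + ℓ = μj + ℓ + 2 ^ j from by ring, Nat.add_mod_right]
  · -- support in the second interval
    push_neg at hA
    obtain ⟨r1, hr1, hne1⟩ := hA
    have hB : ∀ r < m, perio x J (j + 1) ((μj + r) % 2 ^ (j + 1)) = 0 := by
      intro r0 hr0
      by_contra hne0
      have hs0 : ∃ s, s < m ∧ (μj + r0) % 2 ^ (j + 1) = (μ + s) % 2 ^ (j + 1) := by
        by_contra h
        push_neg at h
        exact hne0 (perio_supp J (j + 1) m μ hj2 x hsupp _ (Nat.mod_lt _ hMpos) h)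
      have hs1 : ∃ s, s < m ∧ (μj + 2 ^ j + r1) % 2 ^ (j + 1) = (μ + s) % 2 ^ (j + 1) := by
        by_contra h
        push_neg at h
        exact hne1 (perio_supp J (j + 1) m μ hj2 x hsupp _ (Nat.mod_lt _ hMpos) h)
      obtain ⟨s0, hs0m, f0⟩ := hs0
      obtain ⟨s1, hs1m, f1⟩ := hs1
      have c0 := mod_add_cong (2 ^ j + r1) f0
      have c1 := mod_add_cong r0 f1
      have e : μj + r0 + (2 ^ j + r1) = μj + 2 ^ j + r1 + r0 := by ring
      have key : (μ + s0 + (2 ^ j + r1)) % 2 ^ (j + 1) = (μ + s1 + r0) % 2 ^ (j + 1) := by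
        rw [← c0, e, c1]
      have := cancel_bound key
        (show μ + s0 + (2 ^ j + r1) = μ + (s0 + (2 ^ j + r1)) from by ring)
        (show μ + s1 + r0 = μ + (s1 + r0) from by ring) (by omega) (by omega)
      omega
    right
    constructor
    · exact aux_supp J j m μ μj x hmP (by omega) hj2 hsupp hsuppj hB
    · exact aux_val J j m μj x hj2 hB
end

section
/- Let x ∈ ℂ^N, N = 2^J, have support contained in a cyclic interval of length m ≤ 2^L with L+1 ≤ j ≤ J-1. Then the periodization x^(j+1) is uniquely determined by x^(j) together with one nonzero component of the vector (x̂_{2^{J-j-1}(2k+1)})_{k=0}^{2^j-1}. Concretely: if u, v ∈ ℂ^{2^{j+1}} both have support in a cyclic interval of length m ≤ 2^{j-1}, have the same 2^j-periodization, and satisfy (F_{2^{j+1}} u)_{2k₀+1} = (F_{2^{j+1}} v)_{2k₀+1} ≠ 0 for some k₀, then u = v. -/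
lemma cross_contra (j m μu μv a b : ℕ) (hj : 1 ≤ j) (hm : m ≤ 2^(j-1))
    (ha : ∃ r, r < m ∧ a = (μu + r) % 2^(j+1))
    (hb : ∃ s, s < m ∧ b = (μu + s) % 2^(j+1))
    (ha' : ∃ r', r' < m ∧ a = (μv + r') % 2^(j+1))
    (hb' : ∃ s', s' < m ∧ (b + 2^j) % 2^(j+1) = (μv + s') % 2^(j+1)) : False := by
  obtain ⟨r, hr, rfl⟩ := ha
  obtain ⟨s, hs, rfl⟩ := hb
  obtain ⟨r', hr', e1⟩ := ha'
  obtain ⟨s', hs', e2⟩ := hb'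
  have hpow : (2:ℕ)^j = 2 * 2^(j-1) := by
    conv_lhs => rw [show j = (j-1)+1 by omega]
    ring
  have hN : (2:ℕ)^(j+1) = 2^j + 2^j := by ring
  have e2' : (μu + s + 2^j) % 2^(j+1) = (μv + s') % 2^(j+1) := by
    rw [← Nat.mod_add_mod]; exact e2
  have h3 : (μv + r') + (μu + s + 2^j) ≡ (μu + r) + (μv + s') [MOD 2^(j+1)] :=
    Nat.ModEq.add (Nat.ModEq.symm e1) e2'
  have h4 : (μu + μv) + (r' + s + 2^j) ≡ (μu + μv) + (r + s') [MOD 2^(j+1)] := by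
    have l1 : (μv + r') + (μu + s + 2^j) = (μu + μv) + (r' + s + 2^j) := by ring
    have l2 : (μu + r) + (μv + s') = (μu + μv) + (r + s') := by ring
    rwa [l1, l2] at h3
  have h5 : r' + s + 2^j ≡ r + s' [MOD 2^(j+1)] := Nat.ModEq.add_left_cancel' _ h4
  have h6 : r' + s + 2^j = r + s' := by
    have := h5
    unfold Nat.ModEq at this
    rwa [Nat.mod_eq_of_lt (by omega), Nat.mod_eq_of_lt (by omega)] at this
  omega

lemma pair_excl (j m μ : ℕ) (hj : 1 ≤ j) (hm : m ≤ 2^(j-1)) (x : ℕ → ℂ)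
    (hx : ∀ k < 2^(j+1), (∀ r < m, k ≠ (μ + r) % 2^(j+1)) → x k = 0)
    (k : ℕ) (hk : k < 2^j) (hxk : x k ≠ 0) : x (k + 2^j) = 0 := by
  have hpow : (2:ℕ)^j = 2 * 2^(j-1) := by
    conv_lhs => rw [show j = (j-1)+1 by omega]
    ring
  have hN : (2:ℕ)^(j+1) = 2^j + 2^j := by ring
  by_contra hxk2
  have h1 : ∃ r, r < m ∧ k = (μ + r) % 2^(j+1) := by
    by_contra h; push_neg at h
    exact hxk (hx k (by omega) h)
  have h2 : ∃ s, s < m ∧ k + 2^j = (μ + s) % 2^(j+1) := by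
    by_contra h; push_neg at h
    exact hxk2 (hx (k + 2^j) (by omega) h)
  obtain ⟨r, hr, e1⟩ := h1
  obtain ⟨s, hs, e2⟩ := h2
  have c1 : (μ + r + 2^j) % 2^(j+1) = (μ + s) % 2^(j+1) := by
    rw [← Nat.mod_add_mod, ← e1, Nat.mod_eq_of_lt (by omega)]
    exact e2
  have c2 : μ + (r + 2^j) ≡ μ + s [MOD 2^(j+1)] := by
    have : μ + (r + 2^j) = μ + r + 2^j := by ring
    rw [this]; exact c1
  have c3 := Nat.ModEq.add_left_cancel' μ c2
  have c4 : r + 2^j = s := by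
    have := c3
    unfold Nat.ModEq at this
    rwa [Nat.mod_eq_of_lt (by omega), Nat.mod_eq_of_lt (by omega)] at this
  omega

lemma exp_shift (j k₀ k : ℕ) :
    Complex.exp (-2 * Real.pi * Complex.I * (((2^j + k : ℕ) : ℂ) * ((2*k₀+1 : ℕ) : ℂ)) / ((2^j + 2^j : ℕ) : ℂ))
    = - Complex.exp (-2 * Real.pi * Complex.I * ((k : ℂ) * ((2*k₀+1 : ℕ) : ℂ)) / ((2^j + 2^j : ℕ) : ℂ)) := by
  have hc : ((2^j : ℕ) : ℂ) ≠ 0 := Nat.cast_ne_zero.mpr (pow_ne_zero _ two_ne_zero)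
  have split : -2 * (Real.pi:ℂ) * Complex.I * (((2^j + k : ℕ) : ℂ) * ((2*k₀+1 : ℕ) : ℂ)) / ((2^j + 2^j : ℕ) : ℂ)
      = -2 * (Real.pi:ℂ) * Complex.I * ((k : ℂ) * ((2*k₀+1 : ℕ) : ℂ)) / ((2^j + 2^j : ℕ) : ℂ)
        + (-(((2*k₀+1 : ℕ) : ℂ) * ((Real.pi:ℂ) * Complex.I))) := by
    push_cast
    rw [show ((2:ℂ)^j + 2^j) = 2 * 2^j by ring]
    field_simp
    ring
  rw [split, Complex.exp_add]
  have h2 : Complex.exp (-(((2*k₀+1 : ℕ):ℂ) * ((Real.pi:ℂ) * Complex.I))) = -1 := by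
    rw [Complex.exp_neg, Complex.exp_nat_mul, Complex.exp_pi_mul_I,
      Odd.neg_one_pow (Nat.odd_iff.mpr (by omega))]
    norm_num
  rw [h2]; ring

lemma dft_odd (j k₀ : ℕ) (x : ℕ → ℂ) :
    dft (2^(j+1)) x (2*k₀+1) = ∑ k ∈ Finset.range (2^j),
      (x k - x (k + 2^j)) * Complex.exp (-2 * Real.pi * Complex.I * ((k:ℂ) * ((2*k₀+1:ℕ):ℂ)) / ((2^j + 2^j : ℕ):ℂ)) := by
  unfold dft
  rw [show (2:ℕ)^(j+1) = 2^j + 2^j from by ring]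
  rw [Finset.sum_range_add, ← Finset.sum_add_distrib]
  apply Finset.sum_congr rfl
  intro k hk
  rw [exp_shift, show 2^j + k = k + 2^j from by ring]
  ring

/-- A vector of length `2^{j+1}` with support in a cyclic interval of length `m ≤ 2^{j-1}`
is uniquely determined by its `2^j`-periodization together with one nonzero odd-indexed
DFT coefficient. -/
theorem unique_lift_from_odd_coeff (j m k₀ : ℕ) (hj : 1 ≤ j) (hm : m ≤ 2 ^ (j - 1))
    (u v : ℕ → ℂ) (μu μv : ℕ)
    (hu : ∀ k < 2 ^ (j + 1), (∀ r < m, k ≠ (μu + r) % 2 ^ (j + 1)) → u k = 0)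
    (hv : ∀ k < 2 ^ (j + 1), (∀ r < m, k ≠ (μv + r) % 2 ^ (j + 1)) → v k = 0)
    (hper : ∀ k < 2 ^ j, u k + u (k + 2 ^ j) = v k + v (k + 2 ^ j))
    (hdft : dft (2 ^ (j + 1)) u (2 * k₀ + 1) = dft (2 ^ (j + 1)) v (2 * k₀ + 1))
    (hne : dft (2 ^ (j + 1)) u (2 * k₀ + 1) ≠ 0) :
    ∀ k < 2 ^ (j + 1), u k = v k := by

  have hN : (2:ℕ)^(j+1) = 2^j + 2^j := by ring
  have exu : ∀ k < 2^j, u k ≠ 0 → u (k + 2^j) = 0 := pair_excl j m μu hj hm u hu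
  have exv : ∀ k < 2^j, v k ≠ 0 → v (k + 2^j) = 0 := pair_excl j m μv hj hm v hv
  have supu : ∀ k < 2^(j+1), u k ≠ 0 → ∃ r, r < m ∧ k = (μu + r) % 2^(j+1) := by
    intro k hk hne0; by_contra h; push_neg at h; exact hne0 (hu k hk h)
  have supv : ∀ k < 2^(j+1), v k ≠ 0 → ∃ r, r < m ∧ k = (μv + r) % 2^(j+1) := by
    intro k hk hne0; by_contra h; push_neg at h; exact hne0 (hv k hk h)
  have cross : ∀ a b, a < 2^(j+1) → b < 2^(j+1) → u a ≠ 0 → u b ≠ 0 → v a ≠ 0 →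
      v ((b + 2^j) % 2^(j+1)) ≠ 0 → False := by
    intro a b ha hb h1 h2 h3 h4
    exact cross_contra j m μu μv a b hj hm (supu a ha h1) (supu b hb h2) (supv a ha h3)
      (supv _ (Nat.mod_lt _ (by positivity)) h4)
  have PQ : ∀ k < 2^j, (u k = v k ∧ u (k+2^j) = v (k+2^j)) ∨
      (v k = u (k+2^j) ∧ v (k+2^j) = u k) := by
    intro k hk
    have hp := hper k hk
    by_cases h1 : u k = v k
    · left; exact ⟨h1, by rw [h1] at hp; exact add_left_cancel hp⟩
    · right
      by_cases h2 : u k = 0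
      · have hvk : v k ≠ 0 := fun h => h1 (h2.trans h.symm)
        have hv2 : v (k + 2^j) = 0 := exv k hk hvk
        rw [h2, hv2] at hp
        constructor
        · simpa using hp.symm
        · rw [hv2, h2]
      · have hu2 : u (k+2^j) = 0 := exu k hk h2
        have hvk : v k = 0 := by
          by_contra hvk
          have hv2 : v (k+2^j) = 0 := exv k hk hvk
          rw [hu2, hv2] at hp; simp at hp; exact h1 hp
        rw [hu2, hvk] at hp
        constructor
        · rw [hvk, hu2]
        · simpa using hp.symm
  by_cases hP : ∀ k < 2^j, u k = v k ∧ u (k+2^j) = v (k+2^j)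
  · intro k hk
    by_cases hk2 : k < 2^j
    · exact (hP k hk2).1
    · have hk3 : k - 2^j < 2^j := by omega
      have := (hP (k - 2^j) hk3).2
      rwa [show k - 2^j + 2^j = k by omega] at this
  · exfalso
    push_neg at hP
    obtain ⟨k₁, hk₁, hk₁ne⟩ := hP
    have hk₁ne' : ¬(u k₁ = v k₁ ∧ u (k₁+2^j) = v (k₁+2^j)) := fun ⟨h1,h2⟩ => hk₁ne h1 h2
    have hQ1 := (PQ k₁ hk₁).resolve_left hk₁ne'
    have hbad : ∃ b, b < 2^(j+1) ∧ u b ≠ 0 ∧ v ((b + 2^j) % 2^(j+1)) ≠ 0 := by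
      by_cases hb1 : u k₁ = 0
      · by_cases hb2 : u (k₁ + 2^j) = 0
        · exact absurd ⟨by rw [hb1, hQ1.1, hb2], by rw [hb2, hQ1.2, hb1]⟩ hk₁ne'
        · refine ⟨k₁ + 2^j, by omega, hb2, ?_⟩
          rw [show k₁ + 2^j + 2^j = k₁ + 2^(j+1) by omega, Nat.add_mod_right,
            Nat.mod_eq_of_lt (by omega), hQ1.1]
          exact hb2
      · refine ⟨k₁, by omega, hb1, ?_⟩
        rw [Nat.mod_eq_of_lt (by omega), hQ1.2]
        exact hb1
    obtain ⟨b, hbN, hub, hvb⟩ := hbad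
    have hQ : ∀ k < 2^j, v k = u (k + 2^j) ∧ v (k + 2^j) = u k := by
      intro k hk
      rcases PQ k hk with hPk | hQk
      · by_cases hz1 : u k = 0
        · by_cases hz2 : u (k + 2^j) = 0
          · exact ⟨by rw [hz2, ← hPk.1, hz1], by rw [hz1, ← hPk.2, hz2]⟩
          · exact absurd (cross (k + 2^j) b (by omega) hbN hz2 hub
              (fun h => hz2 (hPk.2.trans h)) hvb) not_false
        · exact absurd (cross k b (by omega) hbN hz1 hub
            (fun h => hz1 (hPk.1.trans h)) hvb) not_false
      · exact hQk
    have hsum : dft (2^(j+1)) v (2*k₀+1) = - dft (2^(j+1)) u (2*k₀+1) := by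
      rw [dft_odd, dft_odd, ← Finset.sum_neg_distrib]
      apply Finset.sum_congr rfl
      intro k hk
      have h := hQ k (Finset.mem_range.mp hk)
      rw [h.1, h.2]; ring
    exact hne (by linear_combination (hdft.trans hsum) / 2)
end

section
/- Let x ∈ ℂ^N, N ≥ 2, be nonzero with support contained in a cyclic interval of length m ≤ N/2. Then the support interval of minimal length and the first support index μ of x are uniquely determined: if x vanishes outside both {(μ₁+r) mod N : r=0,...,m-1} and {(μ₂+r) mod N : r=0,...,m-1} with x_{μ₁} ≠ 0, x_{(μ₁+m-1) mod N} ≠ 0, x_{μ₂} ≠ 0, x_{(μ₂+m-1) mod N} ≠ 0, and m is minimal with this property, then μ₁ = μ₂. -/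
/-- For `m ≤ N/2`, the first index of a minimal cyclic support interval of a vector
`x ∈ ℂ^N` is uniquely determined. -/
theorem first_support_index_unique (N m μ₁ μ₂ : ℕ) (hN : 2 ≤ N) (hm2 : 2 * m ≤ N)
    (x : ℕ → ℂ) (hμ₁ : μ₁ < N) (hμ₂ : μ₂ < N)
    (h₁ : ∀ k < N, (∀ r < m, k ≠ (μ₁ + r) % N) → x k = 0)
    (h₂ : ∀ k < N, (∀ r < m, k ≠ (μ₂ + r) % N) → x k = 0)
    (hx₁ : x μ₁ ≠ 0) (hx₁e : x ((μ₁ + m - 1) % N) ≠ 0)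
    (hx₂ : x μ₂ ≠ 0) (hx₂e : x ((μ₂ + m - 1) % N) ≠ 0)
    (hmin : ∀ m', (∃ μ' < N, ∀ k < N, (∀ r < m', k ≠ (μ' + r) % N) → x k = 0) → m ≤ m') :
    μ₁ = μ₂ := by
  have hm0 : 0 < m := by
    by_contra h
    exact hx₁ (h₁ μ₁ hμ₁ (fun r hr => by omega))
  have hr : ¬ (∀ r < m, μ₂ ≠ (μ₁ + r) % N) := fun h => hx₂ (h₁ μ₂ hμ₂ h)
  have hs : ¬ (∀ s < m, μ₁ ≠ (μ₂ + s) % N) := fun h => hx₁ (h₂ μ₁ hμ₁ h)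
  push_neg at hr hs
  obtain ⟨r, hrm, hre⟩ := hr
  obtain ⟨s, hsm, hse⟩ := hs
  have key : μ₁ = (μ₁ + r + s) % N := by
    conv_lhs => rw [hse, hre]
    rw [Nat.mod_add_mod]
  have key' : (μ₁ + (r + s)) % N = μ₁ % N := by
    rw [← Nat.add_assoc, ← key, Nat.mod_eq_of_lt hμ₁]
  have hmod : (r + s) % N = 0 % N :=
    (Nat.ModEq.add_left_cancel' μ₁ (key'.trans (by simp)))
  have hdvd : N ∣ r + s := (Nat.modEq_zero_iff_dvd).mp hmod
  have h0 : r + s = 0 := Nat.eq_zero_of_dvd_of_lt hdvd (by omega)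
  have : r = 0 := by omega
  rw [hre, this, Nat.add_zero, Nat.mod_eq_of_lt hμ₁]
end
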